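/- Let ρ be an i-polymatroid on a finite set E with i-dual ρ*, and assume that for every e ∈ E, (1) ρ(E−{e}) = ρ(E) and (2) ρ({e}) = i. Then for every positive integer k there is a bijection from Δ_ρ^k onto Δ_{ρ*}^k; in particular, for every positive integer k the number of k-tuples of matroids decomposing ρ equals the number of k-tuples of matroids decomposing ρ*. -/
import Mathlib


variable {α : Type*}

/-- `ρ` is an (integer) polymatroid on ground set `E`. -/
def IsPolymatroidOn [DecidableEq α] (E : Finset α) (ρ : Finset α → ℤ) : Prop :=
  ρ ∅ = 0 ∧
  (∀ A B : Finset α, A ⊆ B → B ⊆ E → ρ A ≤ ρ B) ∧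
  (∀ A B : Finset α, A ⊆ E → B ⊆ E → ρ (A ∪ B) + ρ (A ∩ B) ≤ ρ A + ρ B)

/-- `r` is the rank function of a matroid on `E` (matroids are exactly the
`1`-polymatroids). -/
def IsMatroidRankOn [DecidableEq α] (E : Finset α) (r : Finset α → ℤ) : Prop :=
  IsPolymatroidOn E r ∧ ∀ e ∈ E, r {e} ≤ 1

/-- `Δ_ρ^k`: the set of `k`-tuples of matroids on `E` whose rank functions sum to `ρ`.
(Matroids on `E` are recorded via their canonical extension `X ↦ r (X ∩ E)`, so that
each matroid on `E` corresponds to exactly one function.) -/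
def Delta [DecidableEq α] (k : ℕ) (E : Finset α) (ρ : Finset α → ℤ) :
    Set (Fin k → Finset α → ℤ) :=
  {M | (∀ i, IsMatroidRankOn E (M i)) ∧ (∀ i X, M i X = M i (X ∩ E)) ∧
    ∀ X ⊆ E, ρ X = ∑ i, M i X}

/-- The `i`-dual of an `i`-polymatroid on `E`. -/
def IDual [DecidableEq α] (i : ℕ) (E : Finset α) (ρ : Finset α → ℤ) :
    Finset α → ℤ :=
  fun X => (i : ℤ) * X.card - ρ E + ρ (E \ X)

section Aux

variable [DecidableEq α]

lemma poly_nonneg {E : Finset α} {ρ : Finset α → ℤ} (hρ : IsPolymatroidOn E ρ)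
    {X : Finset α} (hX : X ⊆ E) : 0 ≤ ρ X := by
  have h := hρ.2.1 ∅ X (Finset.empty_subset X) hX
  rwa [hρ.1] at h

lemma poly_union_le {E : Finset α} {ρ : Finset α → ℤ} (hρ : IsPolymatroidOn E ρ)
    {Y : Finset α} (hY : Y ⊆ E) :
    ∀ Z : Finset α, Z ⊆ E → ρ (Y ∪ Z) ≤ ρ Y + ∑ e ∈ Z, ρ {e} := by
  intro Z
  induction Z using Finset.induction_on with
  | empty => simp
  | @insert a Z ha ih =>
    intro hZ
    rw [Finset.insert_subset_iff] at hZ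
    have hYZ : Y ∪ Z ⊆ E := Finset.union_subset hY hZ.2
    have ha' : ({a} : Finset α) ⊆ E := Finset.singleton_subset_iff.mpr hZ.1
    have hsub := hρ.2.2 (Y ∪ Z) {a} hYZ ha'
    have hnn : 0 ≤ ρ ((Y ∪ Z) ∩ {a}) :=
      poly_nonneg hρ ((Finset.inter_subset_left).trans hYZ)
    have heq : Y ∪ insert a Z = (Y ∪ Z) ∪ {a} := by
      ext x
      simp only [Finset.mem_union, Finset.mem_insert, Finset.mem_singleton]
      tauto
    rw [heq, Finset.sum_insert ha]
    have hih := ih hZ.2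
    linarith

/-- The key sdiff identity used for monotonicity arguments. -/
lemma sdiff_decomp {E A B : Finset α} (hAB : A ⊆ B) (hBE : B ⊆ E) :
    E \ A = (E \ B) ∪ (B \ A) := by
  ext x
  simp only [Finset.mem_sdiff, Finset.mem_union]
  have h1 : x ∈ A → x ∈ B := fun h => hAB h
  have h2 : x ∈ B → x ∈ E := fun h => hBE h
  tauto

lemma sdiff_inter_eq {E X : Finset α} : E \ (X ∩ E) = E \ X := by
  ext x
  simp only [Finset.mem_sdiff, Finset.mem_inter]
  tauto

lemma sdiff_union_compl {E A B : Finset α} : (E \ A) ∪ (E \ B) = E \ (A ∩ B) := by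
  ext x
  simp only [Finset.mem_sdiff, Finset.mem_union, Finset.mem_inter]
  tauto

lemma sdiff_inter_compl {E A B : Finset α} : (E \ A) ∩ (E \ B) = E \ (A ∪ B) := by
  ext x
  simp only [Finset.mem_sdiff, Finset.mem_union, Finset.mem_inter]
  tauto

/-- The candidate bijection: replace each matroid by its "loop-respecting dual". -/
def Phi (E : Finset α) {k : ℕ} (M : Fin k → Finset α → ℤ) : Fin k → Finset α → ℤ :=
  fun j X => (∑ e ∈ X ∩ E, M j {e}) - M j E + M j (E \ X)

lemma phi_apply (E : Finset α) {k : ℕ} (M : Fin k → Finset α → ℤ) (j : Fin k)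
    (X : Finset α) :
    Phi E M j X = (∑ e ∈ X ∩ E, M j {e}) - M j E + M j (E \ X) := rfl

lemma fwd (E : Finset α) (i : ℕ) (ρ : Finset α → ℤ) (hρ : IsPolymatroidOn E ρ)
    (h1 : ∀ e ∈ E, ρ (E.erase e) = ρ E) (h2 : ∀ e ∈ E, ρ {e} = (i : ℤ))
    {k : ℕ} {M : Fin k → Finset α → ℤ} (hM : M ∈ Delta k E ρ) :
    Phi E M ∈ Delta k E (IDual i E ρ) ∧ Phi E (Phi E M) = M := by
  obtain ⟨hmat, hnorm, hsum⟩ := hM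
  -- no matroid in the decomposition has a coloop
  have hco : ∀ (j : Fin k), ∀ e ∈ E, M j (E \ {e}) = M j E := by
    intro j e he
    have hsub : E \ ({e} : Finset α) ⊆ E := Finset.sdiff_subset
    have hle : ∀ j' ∈ (Finset.univ : Finset (Fin k)),
        M j' (E \ {e}) ≤ M j' E := by
      intro j' _
      exact (hmat j').1.2.1 _ _ hsub (subset_refl E)
    have hEe : ρ (E \ {e}) = ρ E := by
      rw [← Finset.erase_eq]; exact h1 e he
    have hs1 : ∑ j', M j' (E \ {e}) = ∑ j', M j' E := by
      rw [← hsum _ hsub, ← hsum E (subset_refl E), hEe]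
    exact (Finset.sum_eq_sum_iff_of_le hle).mp hs1 j (Finset.mem_univ j)
  constructor
  · refine ⟨?_, ?_, ?_⟩
    · -- each Phi E M j is a matroid rank function on E
      intro j
      have hr : IsMatroidRankOn E (M j) := hmat j
      refine ⟨⟨?_, ?_, ?_⟩, ?_⟩
      · -- value at ∅
        simp [phi_apply]
      · -- monotonicity
        intro A B hAB hBE
        have hAE : A ⊆ E := hAB.trans hBE
        have hkey : M j (E \ A) ≤ M j (E \ B) + ∑ e ∈ B \ A, M j {e} := by
          rw [sdiff_decomp hAB hBE]
          exact poly_union_le hr.1 Finset.sdiff_subset (B \ A)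
            ((Finset.sdiff_subset).trans hBE)
        have hsd : (∑ e ∈ B \ A, M j {e}) + ∑ e ∈ A, M j {e} = ∑ e ∈ B, M j {e} :=
          Finset.sum_sdiff hAB
        rw [phi_apply, phi_apply, Finset.inter_eq_left.mpr hAE,
          Finset.inter_eq_left.mpr hBE]
        linarith
      · -- submodularity
        intro A B hAE hBE
        have hUE : A ∪ B ⊆ E := Finset.union_subset hAE hBE
        have hIE : A ∩ B ⊆ E := (Finset.inter_subset_left).trans hAE
        have hsubm := hr.1.2.2 (E \ A) (E \ B) Finset.sdiff_subset Finset.sdiff_subset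
        rw [sdiff_union_compl, sdiff_inter_compl] at hsubm
        have hsums : (∑ e ∈ A ∪ B, M j {e}) + ∑ e ∈ A ∩ B, M j {e}
            = (∑ e ∈ A, M j {e}) + ∑ e ∈ B, M j {e} := Finset.sum_union_inter
        rw [phi_apply, phi_apply, phi_apply, phi_apply,
          Finset.inter_eq_left.mpr hAE, Finset.inter_eq_left.mpr hBE,
          Finset.inter_eq_left.mpr hUE, Finset.inter_eq_left.mpr hIE]
        linarith
      · -- singletons bounded by 1
        intro e he
        have hmono := hr.1.2.1 (E \ {e}) E Finset.sdiff_subset (subset_refl E)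
        have hse := hr.2 e he
        rw [phi_apply, Finset.inter_eq_left.mpr (Finset.singleton_subset_iff.mpr he),
          Finset.sum_singleton]
        linarith
    · -- normalization
      intro j X
      rw [phi_apply, phi_apply, Finset.inter_assoc, Finset.inter_self,
        sdiff_inter_eq]
    · -- the ranks sum to the dual
      intro X hX
      have e1 : ∑ j, ∑ e ∈ X ∩ E, M j {e} = (i : ℤ) * X.card := by
        rw [Finset.sum_comm]
        have hc : ∀ e ∈ X ∩ E, ∑ j, M j {e} = (i : ℤ) := by
          intro e hee
          have heE : e ∈ E := (Finset.mem_inter.mp hee).2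
          rw [← hsum {e} (Finset.singleton_subset_iff.mpr heE)]
          exact h2 e heE
        rw [Finset.sum_congr rfl hc, Finset.sum_const,
          Finset.inter_eq_left.mpr hX, nsmul_eq_mul]
        ring
      have e2 : ∑ j, M j E = ρ E := (hsum E (subset_refl E)).symm
      have e3 : ∑ j, M j (E \ X) = ρ (E \ X) := (hsum _ Finset.sdiff_subset).symm
      have : ∑ j, Phi E M j X
          = (∑ j, ∑ e ∈ X ∩ E, M j {e}) - (∑ j, M j E) + ∑ j, M j (E \ X) := by
        simp only [phi_apply]
        rw [Finset.sum_add_distrib, Finset.sum_sub_distrib]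
      rw [this, e1, e2, e3]
      rfl
  · -- Phi is an involution on Delta
    funext j X
    have hr : IsMatroidRankOn E (M j) := hmat j
    have hr0 : M j ∅ = 0 := hr.1.1
    have hsing : ∀ e ∈ X ∩ E, Phi E M j {e} = M j {e} := by
      intro e hee
      have he : e ∈ E := (Finset.mem_inter.mp hee).2
      rw [phi_apply, Finset.inter_eq_left.mpr (Finset.singleton_subset_iff.mpr he),
        Finset.sum_singleton, hco j e he]
      ring
    have hE' : Phi E M j E = (∑ e ∈ E, M j {e}) - M j E := by
      rw [phi_apply, Finset.inter_self, Finset.sdiff_self, hr0]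
      ring
    have hEX : Phi E M j (E \ X)
        = (∑ e ∈ E \ X, M j {e}) - M j E + M j (X ∩ E) := by
      rw [phi_apply, Finset.inter_eq_left.mpr Finset.sdiff_subset,
        Finset.sdiff_sdiff_self_left, Finset.inter_comm]
    have hpart : (∑ e ∈ E \ (X ∩ E), M j {e}) + ∑ e ∈ X ∩ E, M j {e}
        = ∑ e ∈ E, M j {e} := Finset.sum_sdiff Finset.inter_subset_right
    rw [sdiff_inter_eq] at hpart
    have hXE : M j X = M j (X ∩ E) := hnorm j X
    calc Phi E (Phi E M) j X
        = (∑ e ∈ X ∩ E, Phi E M j {e}) - Phi E M j E + Phi E M j (E \ X) := rfl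
      _ = (∑ e ∈ X ∩ E, M j {e}) - ((∑ e ∈ E, M j {e}) - M j E)
            + ((∑ e ∈ E \ X, M j {e}) - M j E + M j (X ∩ E)) := by
          rw [Finset.sum_congr rfl hsing, hE', hEX]
      _ = M j X := by rw [hXE]; linarith

lemma dual_poly (E : Finset α) (i : ℕ) (ρ : Finset α → ℤ)
    (hρ : IsPolymatroidOn E ρ) (hpi : ∀ e ∈ E, ρ {e} ≤ (i : ℤ)) :
    IsPolymatroidOn E (IDual i E ρ) := by
  refine ⟨?_, ?_, ?_⟩
  · simp [IDual, hρ.1]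
  · intro A B hAB hBE
    have hkey : ρ (E \ A) ≤ ρ (E \ B) + ∑ e ∈ B \ A, ρ {e} := by
      rw [sdiff_decomp hAB hBE]
      exact poly_union_le hρ Finset.sdiff_subset (B \ A)
        ((Finset.sdiff_subset).trans hBE)
    have hb : ∑ e ∈ B \ A, ρ {e} ≤ (B \ A).card • (i : ℤ) :=
      Finset.sum_le_card_nsmul _ _ _ (fun e he =>
        hpi e (hBE (Finset.mem_sdiff.mp he).1))
    rw [nsmul_eq_mul] at hb
    have hcard : (B \ A).card + A.card = B.card :=
      Finset.card_sdiff_add_card_eq_card hAB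
    have hcard' : ((B \ A).card : ℤ) + (A.card : ℤ) = (B.card : ℤ) := by
      exact_mod_cast hcard
    simp only [IDual]
    nlinarith [hb, hkey, hcard']
  · intro A B hAE hBE
    have hsubm := hρ.2.2 (E \ A) (E \ B) Finset.sdiff_subset Finset.sdiff_subset
    rw [sdiff_union_compl, sdiff_inter_compl] at hsubm
    have hcard : (A ∪ B).card + (A ∩ B).card = A.card + B.card :=
      Finset.card_union_add_card_inter A B
    have hcard' : ((A ∪ B).card : ℤ) + ((A ∩ B).card : ℤ)
        = (A.card : ℤ) + (B.card : ℤ) := by exact_mod_cast hcard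
    simp only [IDual]
    nlinarith [hsubm, hcard']

lemma dual_singleton (E : Finset α) (i : ℕ) (ρ : Finset α → ℤ)
    (h1 : ∀ e ∈ E, ρ (E.erase e) = ρ E) :
    ∀ e ∈ E, IDual i E ρ {e} = (i : ℤ) := by
  intro e he
  have : E \ ({e} : Finset α) = E.erase e := (Finset.erase_eq E e).symm
  simp only [IDual, this, h1 e he, Finset.card_singleton]
  ring

lemma dual_h1 (E : Finset α) (i : ℕ) (ρ : Finset α → ℤ)
    (hρ : IsPolymatroidOn E ρ) (h2 : ∀ e ∈ E, ρ {e} = (i : ℤ)) :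
    ∀ e ∈ E, IDual i E ρ (E.erase e) = IDual i E ρ E := by
  intro e he
  have hdiff : E \ E.erase e = {e} := by
    ext x
    simp only [Finset.mem_sdiff, Finset.mem_erase, Finset.mem_singleton]
    constructor
    · rintro ⟨hx, h⟩
      by_contra hne
      exact h ⟨hne, hx⟩
    · rintro rfl
      exact ⟨he, fun h => h.1 rfl⟩
  have hcard : (E.erase e).card + 1 = E.card := Finset.card_erase_add_one he
  have hcard' : ((E.erase e).card : ℤ) + 1 = (E.card : ℤ) := by exact_mod_cast hcard
  simp only [IDual, hdiff, Finset.sdiff_self, hρ.1, h2 e he]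
  have hE : (E.card : ℤ) = ((E.erase e).card : ℤ) + 1 := by linarith
  rw [hE]; ring

lemma dual_dual (E : Finset α) (i : ℕ) (ρ : Finset α → ℤ)
    (hρ : IsPolymatroidOn E ρ) :
    ∀ X ⊆ E, IDual i E (IDual i E ρ) X = ρ X := by
  intro X hX
  have hd : E \ (E \ X) = X := by
    rw [Finset.sdiff_sdiff_self_left]
    exact Finset.inter_eq_right.mpr hX
  have hcard : (E \ X).card + X.card = E.card :=
    Finset.card_sdiff_add_card_eq_card hX
  have hcard' : ((E \ X).card : ℤ) + (X.card : ℤ) = (E.card : ℤ) := by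
    exact_mod_cast hcard
  simp only [IDual, Finset.sdiff_self, hρ.1, hd]
  have hE : (E.card : ℤ) = ((E \ X).card : ℤ) + (X.card : ℤ) := by linarith
  rw [hE]; ring

lemma delta_congr (k : ℕ) (E : Finset α) (ρ σ : Finset α → ℤ)
    (h : ∀ X ⊆ E, ρ X = σ X) : Delta k E ρ = Delta k E σ := by
  ext M
  simp only [Delta, Set.mem_setOf_eq]
  constructor
  · rintro ⟨a, b, c⟩
    exact ⟨a, b, fun X hX => by rw [← h X hX]; exact c X hX⟩
  · rintro ⟨a, b, c⟩
    exact ⟨a, b, fun X hX => by rw [h X hX]; exact c X hX⟩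

end Aux

theorem stmt14 [DecidableEq α] (E : Finset α) (i : ℕ) (hi : 0 < i)
    (ρ : Finset α → ℤ)
    (hρ : IsPolymatroidOn E ρ) (hpi : ∀ e ∈ E, ρ {e} ≤ (i : ℤ))
    (h1 : ∀ e ∈ E, ρ (E.erase e) = ρ E)
    (h2 : ∀ e ∈ E, ρ {e} = (i : ℤ)) :
    ∀ k : ℕ, 0 < k →
      Nonempty (↥(Delta k E ρ) ≃ ↥(Delta k E (IDual i E ρ))) ∧
      (Delta k E ρ).ncard = (Delta k E (IDual i E ρ)).ncard := by
  intro k _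
  set σ := IDual i E ρ with hσ
  have hσρ : IsPolymatroidOn E σ := dual_poly E i ρ hρ hpi
  have hσ2 : ∀ e ∈ E, σ {e} = (i : ℤ) := dual_singleton E i ρ h1
  have hσ1 : ∀ e ∈ E, σ (E.erase e) = σ E := dual_h1 E i ρ hρ h2
  have hDD : Delta k E (IDual i E σ) = Delta k E ρ :=
    delta_congr k E (IDual i E σ) ρ (dual_dual E i ρ hρ)
  have hfwd : ∀ {M : Fin k → Finset α → ℤ}, M ∈ Delta k E ρ →
      Phi E M ∈ Delta k E σ ∧ Phi E (Phi E M) = M :=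
    fun hM => fwd E i ρ hρ h1 h2 hM
  have hbwd : ∀ {M : Fin k → Finset α → ℤ}, M ∈ Delta k E σ →
      Phi E M ∈ Delta k E ρ ∧ Phi E (Phi E M) = M := by
    intro M hM
    have h := fwd E i σ hσρ hσ1 hσ2 hM
    rw [hDD] at h
    exact h
  have e : ↥(Delta k E ρ) ≃ ↥(Delta k E σ) :=
    { toFun := fun M => ⟨Phi E M.1, (hfwd M.2).1⟩
      invFun := fun M => ⟨Phi E M.1, (hbwd M.2).1⟩
      left_inv := fun M => Subtype.ext (hfwd M.2).2
      right_inv := fun M => Subtype.ext (hbwd M.2).2 }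
  refine ⟨⟨e⟩, ?_⟩
  rw [← Nat.card_coe_set_eq, ← Nat.card_coe_set_eq]
  exact Nat.card_congr e
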